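/- Let n ≥ 2 be an even integer and let E be the set of all unordered pairs of distinct elements of Fin n (the edge set of the complete graph K_n). Then there is a partition of E into n − 1 sets, each of size n/2, such that within each set no two pairs share an element (each set is a perfect matching). -/

import Mathlib

private def pf (n : ℕ) (i : Fin (n - 1)) (v : Fin n) : Fin n :=
  if v.val = n - 1 then ⟨i.val, by have := i.isLt; omega⟩
  else if v.val = i.val then ⟨n - 1, by have := i.isLt; omega⟩
  else
    haveI : NeZero (n - 1) := ⟨by have := i.isLt; omega⟩
    ⟨(2 * (i.val : ZMod (n - 1)) - (v.val : ZMod (n - 1))).val,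
      by have := i.isLt
         have h2 := ZMod.val_lt (2 * (i.val : ZMod (n - 1)) - (v.val : ZMod (n - 1)))
         omega⟩

private lemma pf_val_last (n : ℕ) (i : Fin (n - 1)) (v : Fin n) (h : v.val = n - 1) :
    (pf n i v).val = i.val := by simp [pf, h]

private lemma pf_val_eq (n : ℕ) (i : Fin (n - 1)) (v : Fin n) (h1 : v.val ≠ n - 1)
    (h2 : v.val = i.val) : (pf n i v).val = n - 1 := by
  have hi := i.isLt
  simp [pf, h1, h2, Nat.ne_of_lt hi]

private lemma pf_val_other (n : ℕ) (i : Fin (n - 1)) (v : Fin n) (h1 : v.val ≠ n - 1)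
    (h2 : v.val ≠ i.val) :
    (pf n i v).val = (2 * (i.val : ZMod (n - 1)) - (v.val : ZMod (n - 1))).val := by
  simp [pf, h1, h2]

private lemma two_cancel (n : ℕ) (hn : 2 ≤ n) (he : Even n) (x y : ZMod (n - 1))
    (h : 2 * x = 2 * y) : x = y := by
  have h1 : (2 : ZMod (n - 1)) * ((n / 2 : ℕ) : ZMod (n - 1)) = 1 := by
    have e1 : ((2 * (n / 2) : ℕ) : ZMod (n - 1)) =
        ((n - 1 : ℕ) : ZMod (n - 1)) + ((1 : ℕ) : ZMod (n - 1)) := by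
      rw [← Nat.cast_add]
      congr 1
      obtain ⟨k, hk⟩ := he; omega
    rw [Nat.cast_mul, ZMod.natCast_self] at e1
    simpa using e1
  have h2 : ((n / 2 : ℕ) : ZMod (n - 1)) * (2 * x) = ((n / 2 : ℕ) : ZMod (n - 1)) * (2 * y) := by
    rw [h]
  rwa [← mul_assoc, ← mul_assoc, mul_comm ((n / 2 : ℕ) : ZMod (n - 1)) 2, h1, one_mul,
    one_mul] at h2

private lemma pf_invol (n : ℕ) (i : Fin (n - 1)) (v : Fin n) : pf n i (pf n i v) = v := by
  haveI : NeZero (n - 1) := ⟨by have := i.isLt; omega⟩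
  have him : i.val < n - 1 := i.isLt
  apply Fin.ext
  by_cases h1 : v.val = n - 1
  · -- w.val = i.val < n-1
    have hw : (pf n i v).val = i.val := pf_val_last n i v h1
    rw [pf_val_eq n i _ (by omega) hw, h1]
  · by_cases h2 : v.val = i.val
    · have hw : (pf n i v).val = n - 1 := pf_val_eq n i v h1 h2
      rw [pf_val_last n i _ hw, h2]
    · have hvlt : v.val < n - 1 := by have := v.isLt; omega
      have hw : (pf n i v).val = (2 * (i.val : ZMod (n - 1)) - (v.val : ZMod (n - 1))).val :=
        pf_val_other n i v h1 h2
      have hwlt : (pf n i v).val < n - 1 := by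
        rw [hw]; exact ZMod.val_lt _
      have hwcast : (((pf n i v).val : ℕ) : ZMod (n - 1)) =
          2 * (i.val : ZMod (n - 1)) - (v.val : ZMod (n - 1)) := by
        rw [hw]; exact ZMod.natCast_rightInverse _
      have hwne : (pf n i v).val ≠ i.val := by
        intro hcon
        have : (2 * (i.val : ZMod (n - 1)) - (v.val : ZMod (n - 1))) = (i.val : ZMod (n - 1)) := by
          rw [← hwcast, hcon]
        have hv : (v.val : ZMod (n - 1)) = (i.val : ZMod (n - 1)) := by
          have := sub_eq_iff_eq_add.mp this
          linear_combination 2 * (i.val : ZMod (n-1)) - this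
        apply h2
        have := congrArg ZMod.val hv
        rwa [ZMod.val_cast_of_lt hvlt, ZMod.val_cast_of_lt him] at this
      rw [pf_val_other n i _ (by omega) hwne, hwcast]
      have : 2 * (i.val : ZMod (n - 1)) - (2 * (i.val : ZMod (n - 1)) - (v.val : ZMod (n - 1)))
          = (v.val : ZMod (n - 1)) := by ring
      rw [this, ZMod.val_cast_of_lt hvlt]

private lemma pf_ne (n : ℕ) (hn : 2 ≤ n) (he : Even n) (i : Fin (n - 1)) (v : Fin n) :
    pf n i v ≠ v := by
  haveI : NeZero (n - 1) := ⟨by have := i.isLt; omega⟩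
  have him : i.val < n - 1 := i.isLt
  intro hcon
  have hval := congrArg Fin.val hcon
  by_cases h1 : v.val = n - 1
  · rw [pf_val_last n i v h1] at hval; omega
  · by_cases h2 : v.val = i.val
    · rw [pf_val_eq n i v h1 h2] at hval; omega
    · have hvlt : v.val < n - 1 := by have := v.isLt; omega
      rw [pf_val_other n i v h1 h2] at hval
      have e1 : ((((2 * (i.val : ZMod (n - 1)) - (v.val : ZMod (n - 1))).val : ℕ)) : ZMod (n - 1))
          = 2 * (i.val : ZMod (n - 1)) - (v.val : ZMod (n - 1)) := ZMod.natCast_rightInverse _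
      rw [hval] at e1
      have h2i : 2 * (i.val : ZMod (n - 1)) = 2 * (v.val : ZMod (n - 1)) := by
        linear_combination -e1
      have hiv := two_cancel n hn he _ _ h2i
      have hiv' := congrArg ZMod.val hiv
      rw [ZMod.val_cast_of_lt hvlt, ZMod.val_cast_of_lt him] at hiv'
      exact h2 hiv'.symm

private lemma pf_inj (n : ℕ) (hn : 2 ≤ n) (he : Even n) (i j : Fin (n - 1)) (a : Fin n)
    (h : pf n i a = pf n j a) : i = j := by
  haveI : NeZero (n - 1) := ⟨by have := i.isLt; omega⟩
  have him : i.val < n - 1 := i.isLt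
  have hjm : j.val < n - 1 := j.isLt
  have hval := congrArg Fin.val h
  apply Fin.ext
  by_cases h1 : a.val = n - 1
  · rwa [pf_val_last n i a h1, pf_val_last n j a h1] at hval
  · have halt : a.val < n - 1 := by have := a.isLt; omega
    by_cases h2 : a.val = i.val
    · by_cases h3 : a.val = j.val
      · omega
      · rw [pf_val_eq n i a h1 h2, pf_val_other n j a h1 h3] at hval
        have := ZMod.val_lt (2 * (j.val : ZMod (n - 1)) - (a.val : ZMod (n - 1)))
        omega
    · by_cases h3 : a.val = j.val
      · rw [pf_val_other n i a h1 h2, pf_val_eq n j a h1 h3] at hval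
        have := ZMod.val_lt (2 * (i.val : ZMod (n - 1)) - (a.val : ZMod (n - 1)))
        omega
      · rw [pf_val_other n i a h1 h2, pf_val_other n j a h1 h3] at hval
        have hz : 2 * (i.val : ZMod (n - 1)) - (a.val : ZMod (n - 1)) =
            2 * (j.val : ZMod (n - 1)) - (a.val : ZMod (n - 1)) := by
          have e1 := ZMod.natCast_rightInverse
            (2 * (i.val : ZMod (n - 1)) - (a.val : ZMod (n - 1)))
          have e2 := ZMod.natCast_rightInverse
            (2 * (j.val : ZMod (n - 1)) - (a.val : ZMod (n - 1)))
          rw [← e1, ← e2, hval]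
        have h2ij : 2 * (i.val : ZMod (n - 1)) = 2 * (j.val : ZMod (n - 1)) := by
          linear_combination hz
        have := two_cancel n hn he _ _ h2ij
        have := congrArg ZMod.val this
        rwa [ZMod.val_cast_of_lt him, ZMod.val_cast_of_lt hjm] at this

private lemma pf_exists (n : ℕ) (hn : 2 ≤ n) (he : Even n) (a b : Fin n) (hab : a ≠ b) :
    ∃ i : Fin (n - 1), pf n i a = b := by
  haveI : NeZero (n - 1) := ⟨by omega⟩
  by_cases h1 : a.val = n - 1
  · have hblt : b.val < n - 1 := by
      have := b.isLt
      rcases Nat.lt_or_ge b.val (n - 1) with h | h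
      · exact h
      · exfalso; apply hab; apply Fin.ext; omega
    refine ⟨⟨b.val, hblt⟩, Fin.ext ?_⟩
    rw [pf_val_last n _ a h1]
  · by_cases h2 : b.val = n - 1
    · have halt : a.val < n - 1 := by have := a.isLt; omega
      refine ⟨⟨a.val, halt⟩, Fin.ext ?_⟩
      rw [pf_val_eq n _ a h1 rfl, h2]
    · have halt : a.val < n - 1 := by have := a.isLt; omega
      have hblt : b.val < n - 1 := by have := b.isLt; omega
      set c : ZMod (n - 1) := ((n / 2 : ℕ) : ZMod (n - 1)) *
        ((a.val : ZMod (n - 1)) + (b.val : ZMod (n - 1))) with hc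
      have h1' : (2 : ZMod (n - 1)) * ((n / 2 : ℕ) : ZMod (n - 1)) = 1 := by
        have e1 : ((2 * (n / 2) : ℕ) : ZMod (n - 1)) =
            ((n - 1 : ℕ) : ZMod (n - 1)) + ((1 : ℕ) : ZMod (n - 1)) := by
          rw [← Nat.cast_add]
          congr 1
          obtain ⟨k, hk⟩ := he; omega
        rw [Nat.cast_mul, ZMod.natCast_self] at e1
        simpa using e1
      have h2c : 2 * c = (a.val : ZMod (n - 1)) + (b.val : ZMod (n - 1)) := by
        rw [hc, ← mul_assoc, h1', one_mul]
      refine ⟨⟨c.val, ZMod.val_lt c⟩, Fin.ext ?_⟩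
      have hane : a.val ≠ c.val := by
        intro hcon
        have : (a.val : ZMod (n - 1)) = c := by
          rw [hcon]; exact ZMod.natCast_rightInverse c
        have : 2 * (a.val : ZMod (n - 1)) = (a.val : ZMod (n - 1)) + (b.val : ZMod (n - 1)) := by
          rw [this] at h2c ⊢
          exact h2c
        have hab' : (a.val : ZMod (n - 1)) = (b.val : ZMod (n - 1)) := by
          linear_combination this
        have := congrArg ZMod.val hab'
        rw [ZMod.val_cast_of_lt halt, ZMod.val_cast_of_lt hblt] at this
        exact hab (Fin.ext this)
      rw [pf_val_other n _ a h1 hane]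
      have hcv : ((c.val : ℕ) : ZMod (n - 1)) = c := ZMod.natCast_rightInverse c
      have : 2 * ((c.val : ℕ) : ZMod (n - 1)) - (a.val : ZMod (n - 1)) =
          (b.val : ZMod (n - 1)) := by
        rw [hcv]; linear_combination h2c
      rw [this, ZMod.val_cast_of_lt hblt]

/-- For `n ≥ 2` even, the edge set of the complete graph `K_n` can be partitioned into
`n - 1` perfect matchings, each of size `n/2`. -/
theorem complete_graph_partition_even (n : ℕ) (hn : 2 ≤ n) (heven : Even n) :
    ∃ Y : Fin (n - 1) → Finset (Sym2 (Fin n)),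
      (∀ i, (Y i).card = n / 2) ∧
      (∀ i, ∀ e ∈ Y i, ¬ e.IsDiag) ∧
      (∀ e : Sym2 (Fin n), ¬ e.IsDiag → ∃! i : Fin (n - 1), e ∈ Y i) ∧
      (∀ i, ∀ e ∈ Y i, ∀ f ∈ Y i, e ≠ f → ∀ v : Fin n, ¬(v ∈ e ∧ v ∈ f)) := by
  have key : ∀ (i : Fin (n - 1)) (e : Sym2 (Fin n)),
      e ∈ Finset.univ.image (fun v => s(v, pf n i v)) →
      ∀ v : Fin n, v ∈ e → e = s(v, pf n i v) := by
    intro i e he v hv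
    obtain ⟨w, -, hw⟩ := Finset.mem_image.mp he
    rw [← hw] at hv ⊢
    rcases Sym2.mem_iff.mp hv with h | h
    · rw [h]
    · subst h
      rw [pf_invol, Sym2.eq_swap]
  refine ⟨fun i => Finset.univ.image (fun v => s(v, pf n i v)), ?_, ?_, ?_, ?_⟩
  · -- cardinality
    intro i
    show (Finset.univ.image (fun v => s(v, pf n i v))).card = n / 2
    have hfib : (Finset.univ : Finset (Fin n)).card =
        ∑ e ∈ Finset.univ.image (fun v => s(v, pf n i v)),
          (Finset.univ.filter (fun v => s(v, pf n i v) = e)).card := by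
      apply Finset.card_eq_sum_card_fiberwise
      intro v _
      exact Finset.mem_image_of_mem _ (Finset.mem_univ v)
    have hconst : ∀ e ∈ Finset.univ.image (fun v => s(v, pf n i v)),
        (Finset.univ.filter (fun v => s(v, pf n i v) = e)).card = 2 := by
      intro e he
      obtain ⟨w, -, hw⟩ := Finset.mem_image.mp he
      have hset : (Finset.univ.filter (fun v => s(v, pf n i v) = e)) =
          {w, pf n i w} := by
        ext v
        simp only [Finset.mem_filter, Finset.mem_univ, true_and, Finset.mem_insert,
          Finset.mem_singleton]
        constructor
        · intro hv
          rw [← hw] at hv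
          rcases (Sym2.eq_iff.mp hv) with ⟨h1, -⟩ | ⟨h1, -⟩
          · exact Or.inl h1
          · exact Or.inr h1
        · rintro (rfl | rfl)
          · exact hw
          · rw [← hw, Sym2.eq_swap]
            congr 1
            rw [pf_invol]
      rw [hset]
      rw [Finset.card_pair (Ne.symm (pf_ne n hn heven i w))]
    rw [Finset.sum_congr rfl hconst, Finset.sum_const, Finset.card_univ, Fintype.card_fin,
      smul_eq_mul] at hfib
    omega
  · -- non-diagonal
    intro i e he
    obtain ⟨w, -, hw⟩ := Finset.mem_image.mp he
    rw [← hw, Sym2.mk_isDiag_iff]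
    exact Ne.symm (pf_ne n hn heven i w)
  · -- unique round
    intro e hdiag
    induction e using Sym2.ind with
    | _ a b =>
      have hab : a ≠ b := by rwa [Sym2.mk_isDiag_iff] at hdiag
      obtain ⟨i, hi⟩ := pf_exists n hn heven a b hab
      refine ⟨i, ?_, ?_⟩
      · rw [show s(a, b) = s(a, pf n i a) by rw [hi]]
        exact Finset.mem_image_of_mem _ (Finset.mem_univ a)
      · intro j hj
        have := key j _ hj a (Sym2.mem_mk_left a b)
        rcases Sym2.eq_iff.mp this with ⟨-, h1⟩ | ⟨h1, h2⟩
        · exact pf_inj n hn heven j i a (by rw [← h1, hi])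
        · exact absurd h2.symm hab
  · -- matching
    intro i e he f hf hef v ⟨hve, hvf⟩
    exact hef ((key i e he v hve).trans (key i f hf v hvf).symm)
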